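/- Let x_1, …, x_N ∈ ℝ be N distinct real numbers with labels π(1), …, π(N) ∈ {1,…,C} (C = N, π a bijection). Then there exist w ∈ ℝ^C and b ∈ ℝ^C such that for every i, the vector o^{(i)} = w·x_i + b ∈ ℝ^C attains its strict maximum at coordinate π(i). In other words, a rank-1 linear classifier with bias on a 1-dimensional feature can achieve 100% classification accuracy on any N distinct scalar features with arbitrary distinct labels. -/
import Mathlib

/-- A rank-1 linear classifier with bias on a 1-dimensional feature achieves
100% accuracy on any `N` distinct scalar features with arbitrary (bijective)
labels: there exist `w, b` such that `w_j x_i + b_j` attains its strict maximum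
at coordinate `π(i)` for every sample `i`. -/
theorem rank_one_with_bias_separates (N : ℕ) (x : Fin N → ℝ)
    (hx : Function.Injective x) (π : Fin N → Fin N)
    (hπ : Function.Bijective π) :
    ∃ w b : Fin N → ℝ, ∀ i : Fin N, ∀ j : Fin N, j ≠ π i →
      w j * x i + b j < w (π i) * x i + b (π i) := by
  let e := Equiv.ofBijective π hπ
  refine ⟨fun j => x (e.symm j), fun j => -(x (e.symm j))^2 / 2, ?_⟩
  intro i j hj
  have h1 : e.symm (π i) = i := e.symm_apply_apply i
  simp only [ne_eq]
  show x (e.symm j) * x i + -(x (e.symm j))^2/2 < x (e.symm (π i)) * x i + -(x (e.symm (π i)))^2/2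
  rw [h1]
  have h2 : x (e.symm j) ≠ x i := by
    intro h
    exact hj (by rw [← e.apply_symm_apply j, hx h]; rfl)
  nlinarith [sq_nonneg (x (e.symm j) - x i), sub_ne_zero.mpr h2,
    sq_pos_of_ne_zero (sub_ne_zero.mpr h2)]
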